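/- Let n ≥ 2, α ∈ (-n, 0), and φ be a Young function with Λ̲_φ(α) := sup_{x>0} ∫₀¹ φ(t^{1-α} x)/φ(x) · dt/t^{n+1} < ∞. Then for all 0 < s ≤ 1 and x > 0, φ(xs) ≤ 2^{2n} Λ̲_φ(α) φ(2^{1-α} x) s^{n/(1-α)}. -/

import Mathlib

open MeasureTheory Set Filter
open scoped ENNReal NNReal Topology

noncomputable def Lunder (n : ℕ) (α : ℝ) (φ : ℝ → ℝ) : ℝ≥0∞ :=
  ⨆ x ∈ Set.Ioi (0:ℝ), ∫⁻ t in Set.Ioo (0:ℝ) 1,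
    ENNReal.ofReal (φ (t ^ (1 - α) * x) / (φ x * t ^ (n + 1)))

noncomputable def Lover (n : ℕ) (α : ℝ) (φ : ℝ → ℝ) : ℝ≥0∞ :=
  ⨆ x ∈ Set.Ioi (0:ℝ), ∫⁻ t in Set.Ioi (1:ℝ),
    ENNReal.ofReal (φ (t ^ (-α) * x) / (φ x * t ^ (n + 1)))

noncomputable def besovSet (n : ℕ) (α : ℝ) (φ : ℝ → ℝ)
    (Ω : Set (EuclideanSpace ℝ (Fin n))) (u : EuclideanSpace ℝ (Fin n) → ℝ) : Set ℝ :=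
  {l : ℝ | 0 < l ∧
    (∫⁻ x in Ω, ∫⁻ y in Ω,
      ENNReal.ofReal (φ (|u x - u y| / (l * ‖x - y‖ ^ α)) / ‖x - y‖ ^ (2 * n))) ≤ 1}

theorem stmt4 (n : ℕ) (hn : 2 ≤ n) (α : ℝ) (hα1 : -(n : ℝ) < α) (hα2 : α < 0)
    (φ : ℝ → ℝ)
    (hconv : ConvexOn ℝ (Set.Ici 0) φ) (hcont : ContinuousOn φ (Set.Ici 0))
    (hzero : φ 0 = 0) (hpos : ∀ t > 0, 0 < φ t)
    (htop : Filter.Tendsto φ Filter.atTop Filter.atTop)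
    (hfin : Lunder n α φ < ⊤) :
    ∀ s : ℝ, 0 < s → s ≤ 1 → ∀ x : ℝ, 0 < x →
      φ (x * s) ≤ 2 ^ (2 * n) * (Lunder n α φ).toReal * φ (2 ^ (1 - α) * x)
        * s ^ ((n : ℝ) / (1 - α)) := by
  -- monotonicity of φ on [0, ∞)
  have hmono : ∀ a b : ℝ, 0 ≤ a → a ≤ b → φ a ≤ φ b := by
    intro a b ha hab
    rcases eq_or_lt_of_le ha with h0 | ha'
    · rw [← h0, hzero]
      rcases eq_or_lt_of_le (h0.symm ▸ hab : (0:ℝ) ≤ b) with hb | hb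
      · rw [← hb, hzero]
      · exact (hpos b hb).le
    · have hb : 0 < b := lt_of_lt_of_le ha' hab
      have hw1 : (0:ℝ) ≤ 1 - a / b := by
        have : a / b ≤ 1 := (div_le_one hb).2 hab
        linarith
      have hw2 : (0:ℝ) ≤ a / b := div_nonneg ha hb.le
      have hsum : (1 - a / b) + a / b = 1 := by ring
      have hcx := hconv.2 (Set.mem_Ici.2 le_rfl) (Set.mem_Ici.2 hb.le) hw1 hw2 hsum
      simp only [smul_eq_mul, mul_zero, zero_add, hzero] at hcx
      rw [div_mul_cancel₀ _ hb.ne'] at hcx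
      calc φ a ≤ a / b * φ b := by linarith
        _ ≤ 1 * φ b :=
            mul_le_mul_of_nonneg_right ((div_le_one hb).2 hab) (hpos b hb).le
        _ = φ b := one_mul _
  intro s hs hs1 x hx
  have h1α : (0:ℝ) < 1 - α := by linarith
  set τ : ℝ := s ^ ((1:ℝ) / (1 - α)) with hτdef
  have hτ0 : 0 < τ := Real.rpow_pos_of_pos hs _
  have hτ1 : τ ≤ 1 := Real.rpow_le_one hs.le hs1 (by positivity)
  have hτpow : τ ^ (1 - α) = s := by
    rw [hτdef, ← Real.rpow_mul hs.le, one_div_mul_cancel h1α.ne', Real.rpow_one]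
  set y : ℝ := 2 ^ (1 - α) * x with hydef
  have hy0 : 0 < y := mul_pos (Real.rpow_pos_of_pos two_pos _) hx
  have hφy : 0 < φ y := hpos y hy0
  set c : ℝ := φ (x * s) / (φ y * τ ^ (n + 1)) with hcdef
  have hD : 0 < φ y * τ ^ (n + 1) := mul_pos hφy (pow_pos hτ0 _)
  have hφxs : 0 < φ (x * s) := hpos _ (mul_pos hx hs)
  have hc0 : 0 ≤ c := div_nonneg hφxs.le hD.le
  -- key integral bound
  have key : ENNReal.ofReal c * ENNReal.ofReal (τ / 2) ≤ Lunder n α φ := by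
    have hvol : ENNReal.ofReal c * ENNReal.ofReal (τ / 2)
        = ∫⁻ _ in Set.Ioo (τ/2) τ, ENNReal.ofReal c := by
      rw [setLIntegral_const, Real.volume_Ioo]
      congr 2
      ring
    rw [hvol]
    have step1 : (∫⁻ _ in Set.Ioo (τ/2) τ, ENNReal.ofReal c)
        ≤ ∫⁻ t in Set.Ioo (τ/2) τ,
            ENNReal.ofReal (φ (t ^ (1 - α) * y) / (φ y * t ^ (n + 1))) := by
      apply setLIntegral_mono' measurableSet_Ioo
      intro t ht
      apply ENNReal.ofReal_le_ofReal
      have ht0 : 0 < t := lt_of_le_of_lt (by positivity) ht.1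
      have htτ : t < τ := ht.2
      have harg : x * s ≤ t ^ (1 - α) * y := by
        have h2t : τ ≤ 2 * t := by linarith [ht.1]
        have : τ ^ (1 - α) ≤ (2 * t) ^ (1 - α) :=
          Real.rpow_le_rpow hτ0.le h2t h1α.le
        rw [hτpow] at this
        have hmr : (2 * t) ^ (1 - α) = 2 ^ (1 - α) * t ^ (1 - α) :=
          Real.mul_rpow (by norm_num) ht0.le
        rw [hmr] at this
        calc x * s = s * x := mul_comm _ _
          _ ≤ 2 ^ (1 - α) * t ^ (1 - α) * x :=
              mul_le_mul_of_nonneg_right this hx.le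
          _ = t ^ (1 - α) * y := by rw [hydef]; ring
      have hnum : φ (x * s) ≤ φ (t ^ (1 - α) * y) :=
        hmono _ _ (mul_pos hx hs).le harg
      have hden : φ y * t ^ (n + 1) ≤ φ y * τ ^ (n + 1) :=
        mul_le_mul_of_nonneg_left (pow_le_pow_left₀ ht0.le htτ.le _) hφy.le
      exact div_le_div₀ (le_trans hφxs.le hnum) hnum
        (mul_pos hφy (pow_pos ht0 _)) hden
    refine step1.trans ?_
    have hsub : Set.Ioo (τ/2) τ ⊆ Set.Ioo (0:ℝ) 1 := fun t ht =>
      ⟨lt_of_le_of_lt (by positivity) ht.1, lt_of_lt_of_le ht.2 hτ1⟩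
    refine (lintegral_mono_set hsub).trans ?_
    unfold Lunder
    exact le_biSup
      (fun x : ℝ => ∫⁻ t in Set.Ioo (0:ℝ) 1,
        ENNReal.ofReal (φ (t ^ (1 - α) * x) / (φ x * t ^ (n + 1))))
      (Set.mem_Ioi.2 hy0)
  -- convert to real inequality
  have hreal : c * (τ / 2) ≤ (Lunder n α φ).toReal := by
    rw [← ENNReal.ofReal_mul hc0] at key
    have := ENNReal.toReal_mono hfin.ne key
    rwa [ENNReal.toReal_ofReal (by positivity)] at this
  -- unpack c
  have hmain : φ (x * s) ≤ 2 * (Lunder n α φ).toReal * φ y * τ ^ n := by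
    rw [hcdef, div_mul_eq_mul_div, div_le_iff₀ hD] at hreal
    have hτn : τ ^ (n + 1) = τ ^ n * τ := pow_succ τ n
    calc φ (x * s) = (φ (x * s) * (τ / 2)) * (2 / τ) := by field_simp
      _ ≤ ((Lunder n α φ).toReal * (φ y * τ ^ (n + 1))) * (2 / τ) :=
          mul_le_mul_of_nonneg_right hreal (by positivity)
      _ = 2 * (Lunder n α φ).toReal * φ y * τ ^ n := by
          rw [hτn]; field_simp
  have hsn : s ^ ((n : ℝ) / (1 - α)) = τ ^ n := by
    rw [hτdef, ← Real.rpow_natCast (s ^ ((1:ℝ)/(1-α))) n, ← Real.rpow_mul hs.le,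
      one_div_mul_eq_div]
  have hLr0 : 0 ≤ (Lunder n α φ).toReal := ENNReal.toReal_nonneg
  have h2pow : (2:ℝ) ≤ 2 ^ (2 * n) := by
    calc (2:ℝ) = 2 ^ 1 := (pow_one 2).symm
      _ ≤ 2 ^ (2 * n) := pow_le_pow_right₀ one_le_two (by omega)
  rw [hsn]
  have hprod : 0 ≤ (Lunder n α φ).toReal * φ y * τ ^ n := by positivity
  nlinarith [hmain, hprod, h2pow]
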